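/- Let h ≠ 0 and b ∈ ℝ. The parabolic null cylinder X(s,t) = (s + bt + h(t³/3 - t), b + ht², s + bt + h(t³/3 + t)) satisfies H₁ = 0 and K₁ = 0 identically, i.e. both its mean curvature and Gauss curvature vanish wherever the surface is non-degenerate. -/

import Mathlib

noncomputable section

/-- Lorentzian inner product on Minkowski 3-space. -/
def mink (u v : ℝ × ℝ × ℝ) : ℝ := u.1 * v.1 + u.2.1 * v.2.1 - u.2.2 * v.2.2

/-- Determinant of the 3×3 matrix with columns `u,v,w`. -/
def det3 (u v w : ℝ × ℝ × ℝ) : ℝ :=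
  u.1 * (v.2.1 * w.2.2 - v.2.2 * w.2.1)
    - u.2.1 * (v.1 * w.2.2 - v.2.2 * w.1)
    + u.2.2 * (v.1 * w.2.1 - v.2.1 * w.1)

/-- Partial derivative with respect to the first parameter. -/
def pd1 (X : ℝ → ℝ → ℝ × ℝ × ℝ) : ℝ → ℝ → ℝ × ℝ × ℝ := fun s t => deriv (fun u => X u t) s

/-- Partial derivative with respect to the second parameter. -/
def pd2 (X : ℝ → ℝ → ℝ × ℝ × ℝ) : ℝ → ℝ → ℝ × ℝ × ℝ := fun s t => deriv (fun u => X s u) t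

def Ecoef (X : ℝ → ℝ → ℝ × ℝ × ℝ) (s t : ℝ) : ℝ := mink (pd1 X s t) (pd1 X s t)
def Fcoef (X : ℝ → ℝ → ℝ × ℝ × ℝ) (s t : ℝ) : ℝ := mink (pd1 X s t) (pd2 X s t)
def Gcoef (X : ℝ → ℝ → ℝ × ℝ × ℝ) (s t : ℝ) : ℝ := mink (pd2 X s t) (pd2 X s t)

/-- `W = EG - F²`. -/
def Wform (X : ℝ → ℝ → ℝ × ℝ × ℝ) (s t : ℝ) : ℝ :=
  Ecoef X s t * Gcoef X s t - Fcoef X s t ^ 2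

/-- Numerator `H₁ = G·det(Xs,Xt,Xss) - 2F·det(Xs,Xt,Xst) + E·det(Xs,Xt,Xtt)`. -/
def H1 (X : ℝ → ℝ → ℝ × ℝ × ℝ) (s t : ℝ) : ℝ :=
  Gcoef X s t * det3 (pd1 X s t) (pd2 X s t) (pd1 (pd1 X) s t)
    - 2 * Fcoef X s t * det3 (pd1 X s t) (pd2 X s t) (pd2 (pd1 X) s t)
    + Ecoef X s t * det3 (pd1 X s t) (pd2 X s t) (pd2 (pd2 X) s t)

/-- `K₁ = det(Xs,Xt,Xss)·det(Xs,Xt,Xtt) - det(Xs,Xt,Xst)²`. -/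
def K1 (X : ℝ → ℝ → ℝ × ℝ × ℝ) (s t : ℝ) : ℝ :=
  det3 (pd1 X s t) (pd2 X s t) (pd1 (pd1 X) s t)
      * det3 (pd1 X s t) (pd2 X s t) (pd2 (pd2 X) s t)
    - det3 (pd1 X s t) (pd2 X s t) (pd2 (pd1 X) s t) ^ 2

/-- Mean curvature of a timelike surface (`ε = 1`, `W < 0`). -/
def Hmean (X : ℝ → ℝ → ℝ × ℝ × ℝ) (s t : ℝ) : ℝ :=
  -(1 / 2) * H1 X s t / (-(Wform X s t)) ^ ((3 : ℝ) / 2)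

/-- Gauss curvature `K = -K₁/W²`. -/
def Kcurv (X : ℝ → ℝ → ℝ × ℝ × ℝ) (s t : ℝ) : ℝ :=
  -(K1 X s t) / (Wform X s t) ^ 2

/-- The parabolic null cylinder
`X(s,t) = (s + bt + h(t³/3 - t), b + ht², s + bt + h(t³/3 + t))` satisfies `H₁ = 0`
and `K₁ = 0` identically: both its mean curvature and its Gauss curvature vanish
wherever the surface is non-degenerate. -/
theorem stmt_19 (h b : ℝ) (hh : h ≠ 0) :
    let X : ℝ → ℝ → ℝ × ℝ × ℝ := fun s t =>
      (s + b * t + h * (t ^ 3 / 3 - t), b + h * t ^ 2,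
        s + b * t + h * (t ^ 3 / 3 + t))
    ∀ s t : ℝ, H1 X s t = 0 ∧ K1 X s t = 0 := by
  intro X s t
  have hp1 : ∀ s t : ℝ, pd1 X s t = ((1 : ℝ), (0 : ℝ), (1 : ℝ)) := by
    intro s t
    have hd : HasDerivAt (fun u : ℝ => X u t) ((1 : ℝ), (0 : ℝ), (1 : ℝ)) s := by
      refine HasDerivAt.prodMk ?_ (HasDerivAt.prodMk ?_ ?_)
      · simpa [add_assoc] using ((hasDerivAt_id s).add_const (b * t + h * (t ^ 3 / 3 - t)))
      · exact hasDerivAt_const _ _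
      · simpa [add_assoc] using ((hasDerivAt_id s).add_const (b * t + h * (t ^ 3 / 3 + t)))
    simpa [pd1] using hd.deriv
  have hp11 : pd1 (pd1 X) s t = (0, 0, 0) := by
    have : (fun u : ℝ => pd1 X u t) = fun _ => ((1 : ℝ), (0 : ℝ), (1 : ℝ)) := by
      funext u; exact hp1 u t
    show deriv (fun u => pd1 X u t) s = _
    rw [this]; simp; rfl
  have hp12 : pd2 (pd1 X) s t = (0, 0, 0) := by
    have : (fun u : ℝ => pd1 X s u) = fun _ => ((1 : ℝ), (0 : ℝ), (1 : ℝ)) := by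
      funext u; exact hp1 s u
    show deriv (fun u => pd1 X s u) t = _
    rw [this]; simp; rfl
  constructor
  · simp [H1, Ecoef, Fcoef, Gcoef, mink, det3, hp1 s t, hp11, hp12]
  · simp [K1, det3, hp11, hp12]
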